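/- Let m ≥ 3 and let n ≥ 5 be odd. For every i with 0 ≤ i ≤ m−1 and every pair of distinct j, j' ∈ Z/nZ, the Cartesian product P_m □ C_n has a 2-factor consisting of two cycles that separates the pair {u_{i,j}, u_{i,j'}}. -/

import Mathlib

open SimpleGraph

/-- `H` is a 2-factor of `X`: a spanning subgraph of `X` (on the same vertex set)
in which every vertex has valency 2. -/
def IsTwoFactor {V : Type*} (X H : SimpleGraph V) : Prop :=
  H ≤ X ∧ ∀ v : V, (H.neighborSet v).ncard = 2

/-- The 2-factor `H` separates the vertex set `A`: every connected component (cycle)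
of `H` contains exactly one vertex of `A`; in particular `H` consists of exactly
`A.card` cycles, each containing exactly one vertex of `A`. -/
def SeparatesSet {V : Type*} (H : SimpleGraph V) (A : Finset V) : Prop :=
  ∀ C : H.ConnectedComponent, ∃! a : V, a ∈ A ∧ H.connectedComponentMk a = C

/-- A graph `X` is `k`-spanning cyclable if for every set `A` of `k` distinct vertices
there is a 2-factor of `X` consisting of `k` cycles such that each vertex of `A`
belongs to a distinct cycle. -/
def SpanningCyclable {V : Type*} (X : SimpleGraph V) (k : ℕ) : Prop :=
  ∀ A : Finset V, A.card = k → ∃ H : SimpleGraph V, IsTwoFactor X H ∧ SeparatesSet H A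

/-- The cycle `C_n` on vertex set `ZMod n`: `x` and `y` are adjacent iff `x - y ∈ {1, -1}`. -/
def cycleZMod (n : ℕ) : SimpleGraph (ZMod n) :=
  SimpleGraph.circulantGraph ({1, -1} : Set (ZMod n))

/-- The pseudo-Cartesian product `C_m □_ℓ C_n`: start with `P_m □ C_n` (columns indexed by
`Fin m`, rows by `ZMod n`) and add the edges from `u_{m-1,j}` to `u_{0,j+ℓ}`.
When `ℓ = 0` this is the Cartesian product `C_m □ C_n`. -/
def pseudoProd (m n : ℕ) (l : ZMod n) : SimpleGraph (Fin m × ZMod n) :=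
  SimpleGraph.fromRel (fun u v =>
    (u.1 = v.1 ∧ v.2 = u.2 + 1) ∨
    ((u.1 : ℕ) + 1 = (v.1 : ℕ) ∧ u.2 = v.2) ∨
    ((u.1 : ℕ) = m - 1 ∧ (v.1 : ℕ) = 0 ∧ v.2 = u.2 + l))


section Aux

namespace TwoFac

variable {V : Type*}

def nxt (L T : ℕ) : ℕ := if T + 1 = L then 0 else T + 1
def prv (L T : ℕ) : ℕ := if T = 0 then L - 1 else T - 1

lemma nxt_lt {L T : ℕ} (h : T < L) : nxt L T < L := by
  unfold nxt; split <;> omega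

lemma prv_lt {L T : ℕ} (h : T < L) : prv L T < L := by
  unfold prv; split <;> omega

lemma nxt_prv {L T : ℕ} (h : T < L) : nxt L (prv L T) = T := by
  unfold nxt prv; split <;> split <;> omega

def cyc (f : ℕ → V) (L : ℕ) : SimpleGraph V where
  Adj u v := u ≠ v ∧ ∃ T, T < L ∧ ((f T = u ∧ f (nxt L T) = v) ∨ (f T = v ∧ f (nxt L T) = u))
  symm := by
    refine ⟨?_⟩
    rintro u v ⟨h, T, hT, hc⟩
    exact ⟨h.symm, T, hT, hc.symm⟩
  loopless := ⟨by rintro u ⟨h, _⟩; exact h rfl⟩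

lemma cyc_adj {f : ℕ → V} {L : ℕ} {u v : V} :
    (cyc f L).Adj u v ↔ u ≠ v ∧ ∃ T, T < L ∧
      ((f T = u ∧ f (nxt L T) = v) ∨ (f T = v ∧ f (nxt L T) = u)) := Iff.rfl

lemma cyc_adj_mem {f : ℕ → V} {L : ℕ} {u v : V} (h : (cyc f L).Adj u v) :
    ∃ T, T < L ∧ f T = u := by
  obtain ⟨-, T, hT, hc⟩ := h
  rcases hc with ⟨h1, h2⟩ | ⟨h1, h2⟩
  · exact ⟨T, hT, h1⟩
  · exact ⟨nxt L T, nxt_lt hT, h2⟩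

lemma cyc_le {X : SimpleGraph V} {f : ℕ → V} {L : ℕ}
    (hadj : ∀ T, T < L → X.Adj (f T) (f (nxt L T))) : cyc f L ≤ X := by
  rintro u v ⟨h, T, hT, hc⟩
  rcases hc with ⟨h1, h2⟩ | ⟨h1, h2⟩
  · exact h1 ▸ h2 ▸ hadj T hT
  · exact h1 ▸ h2 ▸ (hadj T hT).symm

lemma cyc_neighborSet {f : ℕ → V} {L : ℕ} (hL : 3 ≤ L)
    (inj : ∀ s t, s < L → t < L → f s = f t → s = t) {T : ℕ} (hT : T < L) :
    (cyc f L).neighborSet (f T) = {f (nxt L T), f (prv L T)} := by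
  ext u
  simp only [mem_neighborSet, Set.mem_insert_iff, Set.mem_singleton_iff]
  constructor
  · rintro ⟨hne, S, hS, hc⟩
    rcases hc with ⟨h1, h2⟩ | ⟨h1, h2⟩
    · left; rw [inj S T hS hT h1] at h2; exact h2.symm
    · right
      have : nxt L S = T := inj _ _ (nxt_lt hS) hT h2
      have hS' : S = prv L T := by
        unfold nxt at this; unfold prv
        split at this <;> split <;> omega
      rw [← hS', h1]
  · intro h
    rcases h with rfl | rfl
    · refine ⟨?_, T, hT, Or.inl ⟨rfl, rfl⟩⟩
      intro he
      have := inj _ _ hT (nxt_lt hT) he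
      unfold nxt at this; split at this <;> omega
    · refine ⟨?_, prv L T, prv_lt hT, Or.inr ⟨rfl, by rw [nxt_prv hT]⟩⟩
      intro he
      have := inj _ _ hT (prv_lt hT) he
      unfold prv at this; split at this <;> omega

lemma cyc_neighborSet_empty {f : ℕ → V} {L : ℕ} {v : V}
    (hv : ∀ T, T < L → f T ≠ v) : (cyc f L).neighborSet v = ∅ := by
  ext u
  simp only [mem_neighborSet, Set.mem_empty_iff_false, iff_false]
  intro h
  obtain ⟨T, hT, hfT⟩ := cyc_adj_mem h
  exact hv T hT hfT

lemma cyc_reachable {f : ℕ → V} {L : ℕ}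
    (inj : ∀ s t, s < L → t < L → f s = f t → s = t) :
    ∀ T, T < L → (cyc f L).Reachable (f 0) (f T) := by
  intro T
  induction T with
  | zero => intro _; exact Reachable.refl _
  | succ S ih =>
    intro hS
    refine (ih (by omega)).trans (Adj.reachable ?_)
    have hnx : nxt L S = S + 1 := by unfold nxt; split <;> omega
    exact ⟨fun he => by have := inj S (S+1) (by omega) hS he; omega, S, by omega,
      Or.inl ⟨rfl, by rw [hnx]⟩⟩

/-- main abstract lemma -/
theorem two_cycle_factor [DecidableEq V] (X : SimpleGraph V) (f1 f2 : ℕ → V) (L1 L2 : ℕ)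
    (hL1 : 3 ≤ L1) (hL2 : 3 ≤ L2)
    (inj1 : ∀ s t, s < L1 → t < L1 → f1 s = f1 t → s = t)
    (inj2 : ∀ s t, s < L2 → t < L2 → f2 s = f2 t → s = t)
    (hadj1 : ∀ T, T < L1 → X.Adj (f1 T) (f1 (nxt L1 T)))
    (hadj2 : ∀ T, T < L2 → X.Adj (f2 T) (f2 (nxt L2 T)))
    (disj : ∀ s t, s < L1 → t < L2 → f1 s ≠ f2 t)
    (cover : ∀ v, (∃ T, T < L1 ∧ f1 T = v) ∨ (∃ T, T < L2 ∧ f2 T = v))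
    (m1 m2 : V) (hm1 : ∃ T, T < L1 ∧ f1 T = m1) (hm2 : ∃ T, T < L2 ∧ f2 T = m2) :
    ∃ H, IsTwoFactor X H ∧ SeparatesSet H {m1, m2} := by
  classical
  set H : SimpleGraph V := cyc f1 L1 ⊔ cyc f2 L2 with hH
  have hnbr : ∀ v, H.neighborSet v = (cyc f1 L1).neighborSet v ∪ (cyc f2 L2).neighborSet v := by
    intro v; ext u; simp [hH, mem_neighborSet, sup_adj]
  -- side invariance
  have side_adj : ∀ u v, H.Adj u v → ((∃ T, T < L1 ∧ f1 T = u) ↔ (∃ T, T < L1 ∧ f1 T = v)) := by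
    intro u v huv
    rcases huv with h | h
    · constructor <;> intro _
      · obtain ⟨T, hT, hfT⟩ := cyc_adj_mem h.symm; exact ⟨T, hT, hfT⟩
      · obtain ⟨T, hT, hfT⟩ := cyc_adj_mem h; exact ⟨T, hT, hfT⟩
    · obtain ⟨S, hS, hfS⟩ := cyc_adj_mem h
      obtain ⟨S', hS', hfS'⟩ := cyc_adj_mem h.symm
      refine iff_of_false ?_ ?_
      · rintro ⟨T, hT, hfT⟩
        exact disj T S hT hS (hfT.trans hfS.symm)
      · rintro ⟨T, hT, hfT⟩
        exact disj T S' hT hS' (hfT.trans hfS'.symm)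
  have side_reach : ∀ u v, H.Reachable u v →
      ((∃ T, T < L1 ∧ f1 T = u) ↔ (∃ T, T < L1 ∧ f1 T = v)) := by
    intro u v huv
    obtain ⟨w⟩ := huv
    induction w with
    | nil => rfl
    | cons h p ih => exact (side_adj _ _ h).trans ih
  have hm1m2 : m1 ≠ m2 := by
    obtain ⟨T, hT, hfT⟩ := hm1
    obtain ⟨S, hS, hfS⟩ := hm2
    intro he
    exact disj T S hT hS (by rw [hfT, hfS, he])
  clear hm1m2
  refine ⟨H, ⟨sup_le (cyc_le hadj1) (cyc_le hadj2), ?_⟩, ?_⟩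
  · -- degree two
    intro v
    rcases cover v with ⟨T, hT, rfl⟩ | ⟨T, hT, rfl⟩
    · rw [hnbr, cyc_neighborSet hL1 inj1 hT,
        cyc_neighborSet_empty (fun S hS he => disj T S hT hS he.symm), Set.union_empty]
      refine Set.ncard_pair ?_
      intro he
      have := inj1 _ _ (nxt_lt hT) (prv_lt hT) he
      unfold nxt prv at this
      split at this <;> split at this <;> omega
    · rw [hnbr, cyc_neighborSet hL2 inj2 hT,
        cyc_neighborSet_empty (fun S hS he => disj S T hS hT he), Set.empty_union]
      refine Set.ncard_pair ?_
      intro he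
      have := inj2 _ _ (nxt_lt hT) (prv_lt hT) he
      unfold nxt prv at this
      split at this <;> split at this <;> omega
  · -- separates
    intro C
    obtain ⟨v, hv⟩ := C.exists_rep
    have hr1 : ∀ T, T < L1 → H.Reachable (f1 T) m1 := by
      intro T hT
      obtain ⟨S, hS, hfS⟩ := hm1
      exact ((cyc_reachable inj1 T hT).symm.trans (hfS ▸ cyc_reachable inj1 S hS)).mono le_sup_left
    have hr2 : ∀ T, T < L2 → H.Reachable (f2 T) m2 := by
      intro T hT
      obtain ⟨S, hS, hfS⟩ := hm2
      exact ((cyc_reachable inj2 T hT).symm.trans (hfS ▸ cyc_reachable inj2 S hS)).mono le_sup_right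
    rcases cover v with ⟨T, hT, hfT⟩ | ⟨T, hT, hfT⟩
    · refine ⟨m1, ⟨Finset.mem_insert_self _ _, ?_⟩, ?_⟩
      · rw [← hv]
        exact ConnectedComponent.sound (hfT ▸ (hr1 T hT)).symm
      · rintro a ⟨ha, haC⟩
        rcases Finset.mem_insert.mp ha with rfl | ha
        · rfl
        · rw [Finset.mem_singleton] at ha
          subst ha
          exfalso
          rw [← hv] at haC
          have hreach : H.Reachable a v := ConnectedComponent.exact haC
          obtain ⟨S, hS, hfS⟩ := hm2
          have : (∃ T, T < L1 ∧ f1 T = v) := ⟨T, hT, hfT⟩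
          have hin : (∃ T, T < L1 ∧ f1 T = a) := (side_reach a v hreach).mpr this
          obtain ⟨T', hT', hfT'⟩ := hin
          exact disj T' S hT' hS (by rw [hfT', hfS])
    · refine ⟨m2, ⟨Finset.mem_insert_of_mem (Finset.mem_singleton_self _), ?_⟩, ?_⟩
      · rw [← hv]
        exact ConnectedComponent.sound (hfT ▸ (hr2 T hT)).symm
      · rintro a ⟨ha, haC⟩
        rcases Finset.mem_insert.mp ha with rfl | ha
        · exfalso
          rw [← hv] at haC
          have hreach : H.Reachable a v := ConnectedComponent.exact haC
          have hin : (∃ T, T < L1 ∧ f1 T = a) := hm1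
          have hv1 : (∃ T, T < L1 ∧ f1 T = v) := (side_reach a v hreach).mp hin
          obtain ⟨T', hT', hfT'⟩ := hv1
          exact disj T' T hT' hT (by rw [hfT', hfT])
        · exact (Finset.mem_singleton.mp ha)

end TwoFac


namespace TwoFac

/-- serpentine Hamiltonian cycle of the (W+2)×(K+3) grid (columns 0..W+1, rows 0..K+2),
valid as a cycle when W is even. -/
def gridF (W K T : ℕ) : ℕ × ℕ :=
  if T < K+3 then (0, T)
  else if T < (K+3)+(W+1)*(K+2) then
    ((T-(K+3))/(K+2) + 1,
      if (T-(K+3))/(K+2) % 2 = 0 then (K+2)-((T-(K+3))%(K+2)) else 1+((T-(K+3))%(K+2)))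
  else (W+1-(T-((K+3)+(W+1)*(K+2))), 0)

def gridL (W K : ℕ) : ℕ := (W+2)*(K+3)

lemma gridL_eq (W K : ℕ) : gridL W K = (K+3)+(W+1)*(K+2)+(W+1) := by
  unfold gridL; ring

lemma gE1 {W K T : ℕ} (h : T < K+3) : gridF W K T = (0, T) := by
  unfold gridF; rw [if_pos h]

lemma gE2 {W K q s : ℕ} (hq : q ≤ W) (hs : s ≤ K+1) :
    gridF W K ((K+3)+q*(K+2)+s) = (q+1, if q % 2 = 0 then (K+2)-s else 1+s) := by
  have hqm : q*(K+2) ≤ W*(K+2) := Nat.mul_le_mul_right _ hq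
  have hW1 : (W+1)*(K+2) = W*(K+2)+(K+2) := by ring
  have hT2 : (K+3)+q*(K+2)+s < (K+3)+(W+1)*(K+2) := by omega
  unfold gridF
  rw [if_neg (by omega), if_pos hT2]
  have hD : (K+3)+q*(K+2)+s-(K+3) = (K+2)*q+s := by rw [mul_comm]; omega
  have hdiv : ((K+2)*q+s)/(K+2) = q := by
    rw [Nat.mul_add_div (by omega), Nat.div_eq_of_lt (by omega)]
    omega
  have hmod : ((K+2)*q+s)%(K+2) = s := by
    rw [Nat.mul_add_mod]; exact Nat.mod_eq_of_lt (by omega)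
  rw [hD, hdiv, hmod]

lemma gE3 {W K s : ℕ} (hs : s ≤ W) :
    gridF W K ((K+3)+(W+1)*(K+2)+s) = (W+1-s, 0) := by
  unfold gridF
  rw [if_neg (by omega), if_neg (by omega)]
  congr 1
  omega

lemma gDec {W K T : ℕ} (h : T < gridL W K) :
    T < K+3 ∨ (∃ q ≤ W, ∃ s ≤ K+1, T = (K+3)+q*(K+2)+s) ∨
      (∃ s ≤ W, T = (K+3)+(W+1)*(K+2)+s) := by
  rw [gridL_eq] at h
  by_cases h1 : T < K+3
  · exact Or.inl h1
  by_cases h2 : T < (K+3)+(W+1)*(K+2)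
  · refine Or.inr (Or.inl ⟨(T-(K+3))/(K+2), ?_, (T-(K+3))%(K+2), ?_, ?_⟩)
    · have h3 : (K+2)*(W+1) = (W+1)*(K+2) := by ring
      have : (T-(K+3))/(K+2) < W+1 := by
        rw [Nat.div_lt_iff_lt_mul (by omega)]
        omega
      omega
    · have := Nat.mod_lt (T-(K+3)) (y := K+2) (by omega); omega
    · have := Nat.div_add_mod (T-(K+3)) (K+2)
      rw [mul_comm] at this
      omega
  · exact Or.inr (Or.inr ⟨T-((K+3)+(W+1)*(K+2)), by omega, by omega⟩)

lemma grid_mem {W K T : ℕ} (h : T < gridL W K) :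
    (gridF W K T).1 ≤ W+1 ∧ (gridF W K T).2 ≤ K+2 := by
  rcases gDec h with h1 | ⟨q, hq, s, hs, rfl⟩ | ⟨s, hs, rfl⟩
  · rw [gE1 h1]
    exact ⟨by omega, by omega⟩
  · rw [gE2 hq hs]
    exact ⟨by omega, by dsimp only; split <;> omega⟩
  · rw [gE3 hs]
    exact ⟨by omega, by omega⟩

lemma grid_inj {W K : ℕ} : ∀ T T', T < gridL W K → T' < gridL W K →
    gridF W K T = gridF W K T' → T = T' := by
  intro T T' hT hT' he
  rcases gDec hT with h1 | ⟨q, hq, s, hs, rfl⟩ | ⟨s, hs, rfl⟩ <;>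
    rcases gDec hT' with h1' | ⟨q', hq', s', hs', rfl⟩ | ⟨s', hs', rfl⟩
  · rw [gE1 h1, gE1 h1'] at he
    exact (Prod.mk.injEq _ _ _ _ ▸ he).2
  · rw [gE1 h1, gE2 hq' hs'] at he
    have := (Prod.mk.injEq _ _ _ _ ▸ he).1; omega
  · rw [gE1 h1, gE3 hs'] at he
    have := (Prod.mk.injEq _ _ _ _ ▸ he).1; omega
  · rw [gE2 hq hs, gE1 h1'] at he
    have := (Prod.mk.injEq _ _ _ _ ▸ he).1; omega
  · rw [gE2 hq hs, gE2 hq' hs'] at he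
    obtain ⟨e1, e2⟩ := Prod.mk.injEq _ _ _ _ ▸ he
    have hqq : q = q' := by omega
    subst hqq
    have hss : s = s' := by split at e2 <;> omega
    subst hss; rfl
  · rw [gE2 hq hs, gE3 hs'] at he
    obtain ⟨e1, e2⟩ := Prod.mk.injEq _ _ _ _ ▸ he
    split at e2 <;> omega
  · rw [gE3 hs, gE1 h1'] at he
    have := (Prod.mk.injEq _ _ _ _ ▸ he).1; omega
  · rw [gE3 hs, gE2 hq' hs'] at he
    obtain ⟨e1, e2⟩ := Prod.mk.injEq _ _ _ _ ▸ he
    split at e2 <;> omega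
  · rw [gE3 hs, gE3 hs'] at he
    have := (Prod.mk.injEq _ _ _ _ ▸ he).1; omega

lemma grid_cover {W K : ℕ} : ∀ c r, c ≤ W+1 → r ≤ K+2 →
    ∃ T, T < gridL W K ∧ gridF W K T = (c, r) := by
  intro c r hc hr
  have hLeq := gridL_eq W K
  rcases Nat.eq_zero_or_pos c with rfl | hc1
  · refine ⟨r, ?_, gE1 (by omega)⟩
    have : 0*(K+2) ≤ (W+1)*(K+2) := Nat.mul_le_mul_right _ (by omega)
    omega
  rcases Nat.eq_zero_or_pos r with rfl | hr1
  · refine ⟨(K+3)+(W+1)*(K+2)+(W+1-c), by omega, ?_⟩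
    rw [gE3 (by omega)]
    congr 1
    omega
  · set q := c - 1 with hqdef
    set s := if q % 2 = 0 then (K+2)-r else r-1 with hsdef
    have hq : q ≤ W := by omega
    have hs : s ≤ K+1 := by rw [hsdef]; split <;> omega
    refine ⟨(K+3)+q*(K+2)+s, ?_, ?_⟩
    · have h1 : q*(K+2) ≤ W*(K+2) := Nat.mul_le_mul_right _ hq
      have h2 : (W+1)*(K+2) = W*(K+2)+(K+2) := by ring
      omega
    · rw [gE2 hq hs]
      rw [hsdef]
      rcases Nat.eq_zero_or_pos (q % 2) with hpar | hpar
      · rw [if_pos hpar, if_pos hpar]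
        congr 1 <;> omega
      · rw [if_neg (by omega), if_neg (by omega)]
        congr 1 <;> omega

def GridAdj (p q : ℕ × ℕ) : Prop :=
  (p.1 = q.1 ∧ (p.2 + 1 = q.2 ∨ q.2 + 1 = p.2)) ∨
  (p.2 = q.2 ∧ (p.1 + 1 = q.1 ∨ q.1 + 1 = p.1))

lemma grid_adj {W K : ℕ} (hW : W % 2 = 0) :
    ∀ T, T < gridL W K → GridAdj (gridF W K T) (gridF W K (nxt (gridL W K) T)) := by
  intro T hT
  have hLeq := gridL_eq W K
  rcases gDec hT with h1 | ⟨q, hq, s, hs, rfl⟩ | ⟨s, hs, rfl⟩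
  · -- first column going up
    have hgt : 0*(K+2) ≤ (W+1)*(K+2) := Nat.mul_le_mul_right _ (by omega)
    have hnx : nxt (gridL W K) T = T + 1 := by unfold nxt; split <;> omega
    rw [hnx]
    by_cases h2 : T + 1 < K+3
    · rw [gE1 h1, gE1 h2]
      exact Or.inl ⟨rfl, Or.inl rfl⟩
    · -- T = K+2, go to block q=0, s=0
      have hTe : T = K+2 := by omega
      have : T + 1 = (K+3)+0*(K+2)+0 := by omega
      rw [gE1 h1, this, gE2 (by omega) (by omega)]
      simp only [Nat.zero_mod, if_pos rfl, Nat.sub_zero, hTe]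
      exact Or.inr ⟨rfl, Or.inl rfl⟩
  · -- serpentine blocks
    have hq2 : q*(K+2) ≤ W*(K+2) := Nat.mul_le_mul_right _ hq
    have hW2 : (W+1)*(K+2) = W*(K+2)+(K+2) := by ring
    by_cases hs2 : s < K+1
    · -- within block
      have hnx : nxt (gridL W K) ((K+3)+q*(K+2)+s) = (K+3)+q*(K+2)+(s+1) := by
        unfold nxt; split <;> omega
      rw [hnx, gE2 hq hs, gE2 hq (by omega)]
      rcases Nat.eq_zero_or_pos (q % 2) with hpar | hpar
      · rw [if_pos hpar, if_pos hpar]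
        exact Or.inl ⟨rfl, Or.inr (by omega)⟩
      · rw [if_neg (by omega), if_neg (by omega)]
        exact Or.inl ⟨rfl, Or.inl (by omega)⟩
    · -- block boundary, s = K+1
      have hse : s = K+1 := by omega
      subst hse
      by_cases hq3 : q < W
      · have he : (K+3)+q*(K+2)+(K+1)+1 = (K+3)+(q+1)*(K+2)+0 := by ring_nf
        have hnx : nxt (gridL W K) ((K+3)+q*(K+2)+(K+1)) = (K+3)+(q+1)*(K+2)+0 := by
          have hq4 : (q+1)*(K+2) ≤ W*(K+2) := Nat.mul_le_mul_right _ (by omega)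
          unfold nxt; split <;> omega
        rw [hnx, gE2 hq (by omega), gE2 (by omega) (by omega)]
        rcases Nat.eq_zero_or_pos (q % 2) with hpar | hpar
        · rw [if_pos hpar, if_neg (by omega)]
          exact Or.inr ⟨by omega, Or.inl rfl⟩
        · rw [if_neg (by omega), if_pos (by omega)]
          exact Or.inr ⟨by omega, Or.inl rfl⟩
      · -- q = W : go to bottom row
        have hqe : q = W := by omega
        rw [hqe]
        have hnx : nxt (gridL W K) ((K+3)+W*(K+2)+(K+1)) = (K+3)+(W+1)*(K+2)+0 := by
          unfold nxt; split <;> omega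
        rw [hnx, gE2 (le_refl W) (by omega), gE3 (by omega)]
        rw [if_pos hW]
        exact Or.inl ⟨by omega, Or.inr (by omega)⟩
  · -- bottom row going left
    have hq2 : (W+1)*(K+2) = W*(K+2)+(K+2) := by ring
    by_cases hs2 : s < W
    · have hnx : nxt (gridL W K) ((K+3)+(W+1)*(K+2)+s) = (K+3)+(W+1)*(K+2)+(s+1) := by
        unfold nxt; split <;> omega
      rw [hnx, gE3 (by omega), gE3 (by omega)]
      exact Or.inr ⟨rfl, Or.inr (by omega)⟩
    · have hse : s = W := by omega
      rw [hse]
      have hnx : nxt (gridL W K) ((K+3)+(W+1)*(K+2)+W) = 0 := by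
        unfold nxt; split <;> omega
      rw [hnx, gE3 (le_refl W), gE1 (by omega)]
      exact Or.inr ⟨rfl, Or.inr (by omega)⟩

end TwoFac


namespace TwoFac

open SimpleGraph

section Rows

variable {n : ℕ} [NeZero n]

lemma zmod_natCast_inj (hn : 5 ≤ n) {r r' : ℕ} (hr : r < n) (hr' : r' < n)
    (h : (r : ZMod n) = r') : r = r' := by
  rw [← ZMod.val_cast_of_lt hr, ← ZMod.val_cast_of_lt hr', h]

lemma zmod_cast_ne_zero (hn : 5 ≤ n) {r : ℕ} (h1 : 0 < r) (h2 : r < n) :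
    (r : ZMod n) ≠ 0 := by
  intro h
  have h0 : ((0:ℕ) : ZMod n) = 0 := by push_cast; rfl
  have := zmod_natCast_inj hn h2 (by omega : (0:ℕ) < n) (h.trans h0.symm)
  omega

lemma rowAdj (hn : 5 ≤ n) (x : ZMod n) : (cycleZMod n).Adj x (x+1) := by
  have h1 : (1 : ZMod n) ≠ 0 := by
    have := zmod_cast_ne_zero (n := n) hn (r := 1) one_pos (by omega)
    simpa using this
  have hne : x ≠ x + 1 := by
    intro h
    exact h1 (by linear_combination h.symm)
  show (SimpleGraph.circulantGraph ({1, -1} : Set (ZMod n))).Adj x (x+1)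
  rw [circulantGraph_adj]
  refine ⟨hne, Or.inr ?_⟩
  have h2 : x + 1 - x = 1 := by ring
  rw [h2]
  exact Set.mem_insert _ _

lemma row_shift (hn : 5 ≤ n) (a : ZMod n) {r : ℕ} (hr : r + 2 < n) :
    a + 2 + ((r : ℕ) : ZMod n) ≠ a ∧ a + 2 + ((r : ℕ) : ZMod n) ≠ a + 1 := by
  constructor
  · intro h
    have : ((r + 2 : ℕ) : ZMod n) = 0 := by push_cast; linear_combination h
    exact zmod_cast_ne_zero hn (by omega) (by omega) this
  · intro h
    have : ((r + 1 : ℕ) : ZMod n) = 0 := by push_cast; linear_combination h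
    exact zmod_cast_ne_zero hn (by omega) (by omega) this

lemma row_inj (hn : 5 ≤ n) (a : ZMod n) {r r' : ℕ} (hr : r < n) (hr' : r' < n)
    (h : a + 2 + ((r : ℕ) : ZMod n) = a + 2 + ((r' : ℕ) : ZMod n)) : r = r' := by
  exact zmod_natCast_inj hn hr hr' (by linear_combination h)

/-- decompose any row different from `a`, `a+1` as `a+2+r` with `r ≤ n-3` -/
lemma row_decomp (hn : 5 ≤ n) (a : ZMod n) (x : ZMod n) (h1 : x ≠ a) (h2 : x ≠ a + 1) :
    ∃ r : ℕ, r ≤ n - 3 ∧ a + 2 + ((r : ℕ) : ZMod n) = x := by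
  refine ⟨(x - (a + 2)).val, ?_, ?_⟩
  · have hlt : (x - (a + 2)).val < n := ZMod.val_lt _
    by_contra hc
    have hcast : (((x - (a+2)).val : ℕ) : ZMod n) = x - (a + 2) :=
      ZMod.natCast_rightInverse _
    rcases (by omega : (x - (a+2)).val = n - 2 ∨ (x - (a+2)).val = n - 1) with he | he
    · apply h1
      have : ((n - 2 : ℕ) : ZMod n) = -2 := by
        have : ((n : ℕ) : ZMod n) = 0 := ZMod.natCast_self n
        push_cast [Nat.cast_sub (by omega : 2 ≤ n)]
        rw [this]; ring
      rw [he, this] at hcast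
      linear_combination -hcast
    · apply h2
      have : ((n - 1 : ℕ) : ZMod n) = -1 := by
        have : ((n : ℕ) : ZMod n) = 0 := ZMod.natCast_self n
        push_cast [Nat.cast_sub (by omega : 1 ≤ n)]
        rw [this]; ring
      rw [he, this] at hcast
      linear_combination -hcast
  · have hcast : (((x - (a+2)).val : ℕ) : ZMod n) = x - (a + 2) :=
      ZMod.natCast_rightInverse _
    rw [hcast]; ring

end Rows

section Cols

def col (m : ℕ) (hm : 0 < m) (s : ℕ) : Fin m := ⟨s % m, Nat.mod_lt _ hm⟩

lemma col_inj {m : ℕ} (hm : 0 < m) {s t : ℕ} (hs : s < m) (ht : t < m)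
    (h : col m hm s = col m hm t) : s = t := by
  have := Fin.mk.injEq _ _ _ _ ▸ h
  rwa [Nat.mod_eq_of_lt hs, Nat.mod_eq_of_lt ht] at this

lemma col_adj {m : ℕ} (hm : 0 < m) {s : ℕ} (hs : s + 1 < m) :
    (pathGraph m).Adj (col m hm s) (col m hm (s+1)) := by
  rw [pathGraph_adj]
  left
  show s % m + 1 = (s+1) % m
  rw [Nat.mod_eq_of_lt (by omega), Nat.mod_eq_of_lt hs]

lemma col_surj {m : ℕ} (hm : 0 < m) (c : Fin m) : ∃ s, s < m ∧ col m hm s = c := by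
  refine ⟨c.val, c.isLt, ?_⟩
  apply Fin.ext
  exact Nat.mod_eq_of_lt c.isLt

def rcol (m : ℕ) (hm : 0 < m) (s : ℕ) : Fin m := ⟨m - 1 - s, by omega⟩

lemma rcol_inj {m : ℕ} (hm : 0 < m) {s t : ℕ} (hs : s < m) (ht : t < m)
    (h : rcol m hm s = rcol m hm t) : s = t := by
  have := Fin.mk.injEq _ _ _ _ ▸ h
  omega

lemma rcol_adj {m : ℕ} (hm : 0 < m) {s : ℕ} (hs : s + 1 < m) :
    (pathGraph m).Adj (rcol m hm s) (rcol m hm (s+1)) := by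
  rw [pathGraph_adj]
  right
  show (m - 1 - (s+1)) + 1 = m - 1 - s
  omega

lemma rcol_surj {m : ℕ} (hm : 0 < m) (c : Fin m) : ∃ s, s < m ∧ rcol m hm s = c := by
  refine ⟨m - 1 - c.val, by omega, ?_⟩
  apply Fin.ext
  show m - 1 - (m - 1 - c.val) = c.val
  have := c.isLt
  omega

end Cols

end TwoFac


namespace TwoFac

open SimpleGraph

lemma case_even (m n : ℕ) (hm : 3 ≤ m) (hn : 5 ≤ n) [NeZero n] (hm2 : m % 2 = 0)
    (a j j' : ZMod n) (i : Fin m)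
    (haj : j = a ∨ j = a + 1) (hj'1 : j' ≠ a) (hj'2 : j' ≠ a + 1) :
    ∃ H, IsTwoFactor (pathGraph m □ cycleZMod n) H ∧
      SeparatesSet H {(i, j), (i, j')} := by
  have hm0 : 0 < m := by omega
  set κ : ℕ → Fin m := col m hm0 with hκ
  set W : ℕ := m - 2 with hW
  set K : ℕ := n - 5 with hK
  have hWm : W + 2 = m := by omega
  have hKn : K + 3 = n - 2 := by omega
  have hWeven : W % 2 = 0 := by omega
  have h1ne : (1 : ZMod n) ≠ 0 := by
    have := zmod_cast_ne_zero (n := n) hn (r := 1) one_pos (by omega)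
    simpa using this
  have hane : a ≠ a + 1 := fun h => h1ne (left_eq_add.mp h)
  set f1 : ℕ → Fin m × ZMod n :=
    fun T => if T < m then (κ T, a) else (κ (2*m-1-T), a+1) with hf1
  set f2 : ℕ → Fin m × ZMod n :=
    fun T => (κ (gridF W K T).1, a + 2 + (((gridF W K T).2 : ℕ) : ZMod n)) with hf2
  have hf1lo : ∀ T, T < m → f1 T = (κ T, a) := fun T hT => by
    rw [hf1]; simp only [if_pos hT]
  have hf1hi : ∀ T, m ≤ T → f1 T = (κ (2*m-1-T), a+1) := fun T hT => by
    rw [hf1]; simp only [if_neg (by omega : ¬ T < m)]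
  have hgL : gridL W K = (K+3)+(W+1)*(K+2)+(W+1) := gridL_eq W K
  refine two_cycle_factor _ f1 f2 (2*m) (gridL W K) (by omega) (by omega) ?_ ?_ ?_ ?_ ?_ ?_
    (i, j) (i, j') ?_ ?_
  · -- inj1
    intro s t hs ht he
    by_cases h1 : s < m <;> by_cases h2 : t < m
    · rw [hf1lo s h1, hf1lo t h2, Prod.mk.injEq] at he
      exact col_inj hm0 h1 h2 he.1
    · rw [hf1lo s h1, hf1hi t (by omega), Prod.mk.injEq] at he
      exact absurd he.2 hane
    · rw [hf1hi s (by omega), hf1lo t h2, Prod.mk.injEq] at he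
      exact absurd he.2.symm hane
    · rw [hf1hi s (by omega), hf1hi t (by omega), Prod.mk.injEq] at he
      have := col_inj hm0 (by omega) (by omega) he.1
      omega
  · -- inj2
    intro s t hs ht he
    have m1 := grid_mem hs
    have m2 := grid_mem ht
    rw [hf2] at he
    simp only [Prod.mk.injEq] at he
    have hc : (gridF W K s).1 = (gridF W K t).1 :=
      col_inj hm0 (by omega) (by omega) he.1
    have hr : (gridF W K s).2 = (gridF W K t).2 :=
      row_inj hn a (by omega) (by omega) he.2
    exact grid_inj s t hs ht (Prod.ext hc hr)
  · -- hadj1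
    intro T hT
    by_cases h1 : T + 1 < m
    · have hnx : nxt (2*m) T = T + 1 := by unfold nxt; split <;> omega
      rw [hnx, hf1lo T (by omega), hf1lo (T+1) h1]
      exact boxProd_adj_left.mpr (col_adj hm0 h1)
    · by_cases h2 : T < m
      · -- T = m-1
        have hTe : T = m - 1 := by omega
        have hnx : nxt (2*m) T = m := by unfold nxt; split <;> omega
        rw [hnx, hf1lo T h2, hf1hi m (le_refl m)]
        have : 2*m-1-m = T := by omega
        rw [this]
        exact boxProd_adj_right.mpr (rowAdj hn a)
      · by_cases h3 : T + 1 < 2*m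
        · have hnx : nxt (2*m) T = T + 1 := by unfold nxt; split <;> omega
          rw [hnx, hf1hi T (by omega), hf1hi (T+1) (by omega)]
          have h4 : 2*m-1-T = (2*m-2-T) + 1 := by omega
          rw [h4]
          have h5 : 2*m-1-(T+1) = 2*m-2-T := by omega
          rw [h5]
          exact boxProd_adj_left.mpr (col_adj hm0 (by omega)).symm
        · -- T = 2m-1
          have hnx : nxt (2*m) T = 0 := by unfold nxt; split <;> omega
          rw [hnx, hf1hi T (by omega), hf1lo 0 (by omega)]
          have : 2*m-1-T = 0 := by omega
          rw [this]
          exact boxProd_adj_right.mpr (rowAdj hn a).symm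
  · -- hadj2
    intro T hT
    have hGA := grid_adj hWeven T hT
    have m1 := grid_mem hT
    have m2 := grid_mem (nxt_lt hT)
    rw [hf2]
    simp only
    rcases hGA with ⟨hc, hr⟩ | ⟨hr, hc⟩
    · rw [hc]
      rcases hr with hr | hr
      · refine boxProd_adj_right.mpr ?_
        have := rowAdj hn (a + 2 + (((gridF W K T).2 : ℕ) : ZMod n))
        have hcast : a + 2 + (((gridF W K (nxt (gridL W K) T)).2 : ℕ) : ZMod n)
            = a + 2 + (((gridF W K T).2 : ℕ) : ZMod n) + 1 := by
          rw [← hr]; push_cast; ring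
        rw [hcast]
        exact this
      · refine boxProd_adj_right.mpr ?_
        have := rowAdj hn (a + 2 + (((gridF W K (nxt (gridL W K) T)).2 : ℕ) : ZMod n))
        have hcast : a + 2 + (((gridF W K T).2 : ℕ) : ZMod n)
            = a + 2 + (((gridF W K (nxt (gridL W K) T)).2 : ℕ) : ZMod n) + 1 := by
          rw [← hr]; push_cast; ring
        rw [hcast]
        exact this.symm
    · rw [hr]
      rcases hc with hc | hc
      · refine boxProd_adj_left.mpr ?_
        rw [← hc]
        exact col_adj hm0 (by omega)
      · refine boxProd_adj_left.mpr ?_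
        rw [← hc]
        exact (col_adj hm0 (by omega)).symm
  · -- disj
    intro s t hs ht he
    have m2 := grid_mem ht
    have hshift := row_shift hn a (r := (gridF W K t).2) (by omega)
    by_cases h1 : s < m
    · rw [hf1lo s h1, hf2] at he
      simp only [Prod.mk.injEq] at he
      exact hshift.1 he.2.symm
    · rw [hf1hi s (by omega), hf2] at he
      simp only [Prod.mk.injEq] at he
      exact hshift.2 he.2.symm
  · -- cover
    rintro ⟨c, x⟩
    obtain ⟨s, hsm, hsc0⟩ := col_surj hm0 c
    have hsc : κ s = c := hsc0
    by_cases hx1 : x = a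
    · exact Or.inl ⟨s, by omega, by rw [hf1lo s hsm, hsc, hx1]⟩
    by_cases hx2 : x = a + 1
    · refine Or.inl ⟨2*m-1-s, by omega, ?_⟩
      rw [hf1hi (2*m-1-s) (by omega)]
      have : 2*m-1-(2*m-1-s) = s := by omega
      rw [this, hsc, hx2]
    · obtain ⟨r, hr, hrx⟩ := row_decomp hn a x hx1 hx2
      obtain ⟨T, hT, hTg⟩ := grid_cover (W := W) (K := K) s r (by omega) (by omega)
      refine Or.inr ⟨T, hT, ?_⟩
      rw [hf2]
      simp only [hTg, hsc, hrx]
  · -- hm1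
    obtain ⟨s, hsm, hsc0⟩ := col_surj hm0 i
    have hsc : κ s = i := hsc0
    rcases haj with rfl | rfl
    · exact ⟨s, by omega, by rw [hf1lo s hsm, hsc]⟩
    · refine ⟨2*m-1-s, by omega, ?_⟩
      rw [hf1hi (2*m-1-s) (by omega)]
      have : 2*m-1-(2*m-1-s) = s := by omega
      rw [this, hsc]
  · -- hm2
    obtain ⟨r, hr, hrx⟩ := row_decomp hn a j' hj'1 hj'2
    obtain ⟨T, hT, hTg⟩ := grid_cover (W := W) (K := K) i.val r (by omega) (by omega)
    refine ⟨T, hT, ?_⟩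
    rw [hf2]
    simp only [hTg, hrx]
    rw [Prod.mk.injEq]
    refine ⟨?_, rfl⟩
    show col m hm0 i.val = i
    apply Fin.ext
    exact Nat.mod_eq_of_lt i.isLt

end TwoFac


namespace TwoFac

open SimpleGraph

lemma case_odd (m n : ℕ) (hm : 3 ≤ m) (hn : 5 ≤ n) [NeZero n] (hm2 : m % 2 = 1)
    (a j j' : ZMod n) (i : Fin m)
    (haj : j = a ∨ j = a + 1) (hj'1 : j' ≠ a) (hj'2 : j' ≠ a + 1)
    (κ : ℕ → Fin m) (si : ℕ)
    (hκinj : ∀ s t, s < m → t < m → κ s = κ t → s = t)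
    (hκadj : ∀ s, s + 1 < m → (pathGraph m).Adj (κ s) (κ (s+1)))
    (hκsurj : ∀ c : Fin m, ∃ s, s < m ∧ κ s = c)
    (hκi : κ si = i) (hsi1 : 1 ≤ si) (hsim : si < m) :
    ∃ H, IsTwoFactor (pathGraph m □ cycleZMod n) H ∧
      SeparatesSet H {(i, j), (i, j')} := by
  have hm0 : 0 < m := by omega
  set W : ℕ := m - 3 with hW
  set K : ℕ := n - 5 with hK
  have hWm : W + 2 = m - 1 := by omega
  have hKn : K + 3 = n - 2 := by omega
  have hWeven : W % 2 = 0 := by omega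
  have h1ne : (1 : ZMod n) ≠ 0 := by
    have := zmod_cast_ne_zero (n := n) hn (r := 1) one_pos (by omega)
    simpa using this
  have hane : a ≠ a + 1 := fun h => h1ne (left_eq_add.mp h)
  have hn1 : ((n-1 : ℕ) : ZMod n) = -1 := by
    have h0 : ((n : ℕ) : ZMod n) = 0 := ZMod.natCast_self n
    push_cast [Nat.cast_sub (by omega : 1 ≤ n)]
    rw [h0]; ring
  set L1 : ℕ := n + 2*m - 2 with hL1def
  set f1 : ℕ → Fin m × ZMod n :=
    fun T => if T < n then (κ 0, a + 1 + ((T : ℕ) : ZMod n))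
      else if T < n + (m-1) then (κ (T-n+1), a)
      else (κ (2*m+n-2-T), a+1) with hf1
  set f2 : ℕ → Fin m × ZMod n :=
    fun T => (κ (1 + (gridF W K T).1), a + 2 + (((gridF W K T).2 : ℕ) : ZMod n)) with hf2
  have hf1A : ∀ T, T < n → f1 T = (κ 0, a + 1 + ((T : ℕ) : ZMod n)) := fun T hT => by
    rw [hf1]; simp only [if_pos hT]
  have hf1B : ∀ T, n ≤ T → T < n + (m-1) → f1 T = (κ (T-n+1), a) := fun T h1 h2 => by
    rw [hf1]; simp only [if_neg (by omega : ¬ T < n), if_pos h2]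
  have hf1C : ∀ T, n + (m-1) ≤ T → f1 T = (κ (2*m+n-2-T), a+1) := fun T h1 => by
    rw [hf1]; simp only [if_neg (by omega : ¬ T < n), if_neg (by omega : ¬ T < n + (m-1))]
  have hgL : gridL W K = (K+3)+(W+1)*(K+2)+(W+1) := gridL_eq W K
  refine two_cycle_factor _ f1 f2 L1 (gridL W K) (by omega) (by omega) ?_ ?_ ?_ ?_ ?_ ?_
    (i, j) (i, j') ?_ ?_
  · -- inj1
    intro s t hs ht he
    by_cases h1 : s < n <;> by_cases h2 : t < n
    · rw [hf1A s h1, hf1A t h2, Prod.mk.injEq] at he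
      exact zmod_natCast_inj hn h1 h2 (by linear_combination he.2)
    · by_cases h3 : t < n + (m-1)
      · rw [hf1A s h1, hf1B t (by omega) h3, Prod.mk.injEq] at he
        have := hκinj _ _ (by omega) (by omega) he.1
        omega
      · rw [hf1A s h1, hf1C t (by omega), Prod.mk.injEq] at he
        have := hκinj _ _ (by omega) (by omega) he.1
        omega
    · by_cases h3 : s < n + (m-1)
      · rw [hf1B s (by omega) h3, hf1A t h2, Prod.mk.injEq] at he
        have := hκinj _ _ (by omega) (by omega) he.1
        omega
      · rw [hf1C s (by omega), hf1A t h2, Prod.mk.injEq] at he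
        have := hκinj _ _ (by omega) (by omega) he.1
        omega
    · by_cases h3 : s < n + (m-1) <;> by_cases h4 : t < n + (m-1)
      · rw [hf1B s (by omega) h3, hf1B t (by omega) h4, Prod.mk.injEq] at he
        have := hκinj _ _ (by omega) (by omega) he.1
        omega
      · rw [hf1B s (by omega) h3, hf1C t (by omega), Prod.mk.injEq] at he
        exact absurd he.2 hane
      · rw [hf1C s (by omega), hf1B t (by omega) h4, Prod.mk.injEq] at he
        exact absurd he.2.symm hane
      · rw [hf1C s (by omega), hf1C t (by omega), Prod.mk.injEq] at he
        have := hκinj _ _ (by omega) (by omega) he.1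
        omega
  · -- inj2
    intro s t hs ht he
    have m1 := grid_mem hs
    have m2 := grid_mem ht
    rw [hf2] at he
    simp only [Prod.mk.injEq] at he
    have hc : (gridF W K s).1 = (gridF W K t).1 := by
      have := hκinj _ _ (by omega) (by omega) he.1
      omega
    have hr : (gridF W K s).2 = (gridF W K t).2 :=
      row_inj hn a (by omega) (by omega) he.2
    exact grid_inj s t hs ht (Prod.ext hc hr)
  · -- hadj1
    intro T hT
    by_cases h1 : T + 1 < n
    · have hnx : nxt L1 T = T + 1 := by unfold nxt; split <;> omega
      rw [hnx, hf1A T (by omega), hf1A (T+1) h1]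
      refine boxProd_adj_right.mpr ?_
      have hcast : a + 1 + ((T+1 : ℕ) : ZMod n) = a + 1 + ((T : ℕ) : ZMod n) + 1 := by
        push_cast; ring
      rw [hcast]
      exact rowAdj hn _
    · by_cases h2 : T < n
      · -- T = n-1
        have hTe : T = n - 1 := by omega
        have hnx : nxt L1 T = n := by unfold nxt; split <;> omega
        rw [hnx, hf1A T h2, hf1B n (le_refl n) (by omega)]
        have hrow : a + 1 + ((T : ℕ) : ZMod n) = a := by
          rw [hTe, hn1]; ring
        rw [hrow]
        have hcol : n - n + 1 = 0 + 1 := by omega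
        rw [hcol]
        exact boxProd_adj_left.mpr (hκadj 0 (by omega))
      · by_cases h3 : T + 1 < n + (m-1)
        · have hnx : nxt L1 T = T + 1 := by unfold nxt; split <;> omega
          rw [hnx, hf1B T (by omega) (by omega), hf1B (T+1) (by omega) h3]
          have hcol : T + 1 - n + 1 = (T - n + 1) + 1 := by omega
          rw [hcol]
          exact boxProd_adj_left.mpr (hκadj (T-n+1) (by omega))
        · by_cases h4 : T < n + (m-1)
          · -- T = n+m-2
            have hnx : nxt L1 T = n + (m-1) := by unfold nxt; split <;> omega
            rw [hnx, hf1B T (by omega) h4, hf1C (n+(m-1)) (le_refl _)]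
            have hc1 : T - n + 1 = m - 1 := by omega
            have hc2 : 2*m+n-2-(n+(m-1)) = m - 1 := by omega
            rw [hc1, hc2]
            exact boxProd_adj_right.mpr (rowAdj hn a)
          · by_cases h5 : T + 1 < L1
            · have hnx : nxt L1 T = T + 1 := by unfold nxt; split <;> omega
              rw [hnx, hf1C T (by omega), hf1C (T+1) (by omega)]
              have hc1 : 2*m+n-2-T = (2*m+n-2-(T+1)) + 1 := by omega
              rw [hc1]
              exact boxProd_adj_left.mpr (hκadj (2*m+n-2-(T+1)) (by omega)).symm
            · -- T = L1 - 1
              have hnx : nxt L1 T = 0 := by unfold nxt; split <;> omega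
              rw [hnx, hf1C T (by omega), hf1A 0 (by omega)]
              have hc1 : 2*m+n-2-T = 1 := by omega
              have hc2 : a + 1 + ((0 : ℕ) : ZMod n) = a + 1 := by push_cast; ring
              rw [hc1, hc2]
              exact boxProd_adj_left.mpr (hκadj 0 (by omega)).symm
  · -- hadj2
    intro T hT
    have hGA := grid_adj hWeven T hT
    have m1 := grid_mem hT
    have m2 := grid_mem (nxt_lt hT)
    rw [hf2]
    simp only
    rcases hGA with ⟨hc, hr⟩ | ⟨hr, hc⟩
    · rw [hc]
      rcases hr with hr | hr
      · refine boxProd_adj_right.mpr ?_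
        have hcast : a + 2 + (((gridF W K (nxt (gridL W K) T)).2 : ℕ) : ZMod n)
            = a + 2 + (((gridF W K T).2 : ℕ) : ZMod n) + 1 := by
          rw [← hr]; push_cast; ring
        rw [hcast]
        exact rowAdj hn _
      · refine boxProd_adj_right.mpr ?_
        have hcast : a + 2 + (((gridF W K T).2 : ℕ) : ZMod n)
            = a + 2 + (((gridF W K (nxt (gridL W K) T)).2 : ℕ) : ZMod n) + 1 := by
          rw [← hr]; push_cast; ring
        rw [hcast]
        exact (rowAdj hn _).symm
    · rw [hr]
      rcases hc with hc | hc
      · refine boxProd_adj_left.mpr ?_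
        have hc1 : 1 + (gridF W K (nxt (gridL W K) T)).1 = (1 + (gridF W K T).1) + 1 := by
          omega
        rw [hc1]
        exact hκadj _ (by omega)
      · refine boxProd_adj_left.mpr ?_
        have hc1 : 1 + (gridF W K T).1 = (1 + (gridF W K (nxt (gridL W K) T)).1) + 1 := by
          omega
        rw [hc1]
        exact (hκadj _ (by omega)).symm
  · -- disj
    intro s t hs ht he
    have m2 := grid_mem ht
    have hshift := row_shift hn a (r := (gridF W K t).2) (by omega)
    by_cases h1 : s < n
    · rw [hf1A s h1, hf2] at he
      simp only [Prod.mk.injEq] at he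
      have := hκinj _ _ (by omega) (by omega) he.1
      omega
    · by_cases h2 : s < n + (m-1)
      · rw [hf1B s (by omega) h2, hf2] at he
        simp only [Prod.mk.injEq] at he
        exact hshift.1 he.2.symm
      · rw [hf1C s (by omega), hf2] at he
        simp only [Prod.mk.injEq] at he
        exact hshift.2 he.2.symm
  · -- cover
    rintro ⟨c, x⟩
    obtain ⟨s, hsm, hsc⟩ := hκsurj c
    by_cases hs0 : s = 0
    · -- column κ 0 : region A
      subst hs0
      refine Or.inl ⟨(x - (a+1)).val, by have := ZMod.val_lt (x - (a+1)); omega, ?_⟩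
      rw [hf1A _ (ZMod.val_lt _), hsc]
      have hcast : (((x - (a+1)).val : ℕ) : ZMod n) = x - (a+1) := ZMod.natCast_rightInverse _
      rw [hcast]
      rw [Prod.mk.injEq]
      exact ⟨rfl, by ring⟩
    · by_cases hx1 : x = a
      · refine Or.inl ⟨n + (s-1), by omega, ?_⟩
        rw [hf1B _ (by omega) (by omega)]
        have : n + (s-1) - n + 1 = s := by omega
        rw [this, hsc, hx1]
      by_cases hx2 : x = a + 1
      · refine Or.inl ⟨n + (m-1) + (m-1-s), by omega, ?_⟩
        rw [hf1C _ (by omega)]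
        have : 2*m+n-2-(n + (m-1) + (m-1-s)) = s := by omega
        rw [this, hsc, hx2]
      · obtain ⟨r, hr, hrx⟩ := row_decomp hn a x hx1 hx2
        obtain ⟨T, hT, hTg⟩ := grid_cover (W := W) (K := K) (s-1) r (by omega) (by omega)
        refine Or.inr ⟨T, hT, ?_⟩
        rw [hf2]
        simp only [hTg]
        have : 1 + (s-1) = s := by omega
        rw [this, hsc, hrx]
  · -- hm1
    rcases haj with rfl | rfl
    · refine ⟨n + (si-1), by omega, ?_⟩
      rw [hf1B _ (by omega) (by omega)]
      have : n + (si-1) - n + 1 = si := by omega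
      rw [this, hκi]
    · refine ⟨n + (m-1) + (m-1-si), by omega, ?_⟩
      rw [hf1C _ (by omega)]
      have : 2*m+n-2-(n + (m-1) + (m-1-si)) = si := by omega
      rw [this, hκi]
  · -- hm2
    obtain ⟨r, hr, hrx⟩ := row_decomp hn a j' hj'1 hj'2
    obtain ⟨T, hT, hTg⟩ := grid_cover (W := W) (K := K) (si-1) r (by omega) (by omega)
    refine ⟨T, hT, ?_⟩
    rw [hf2]
    simp only [hTg]
    have : 1 + (si-1) = si := by omega
    rw [this, hκi, hrx]

end TwoFac

end Aux

open TwoFac in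
/-- For `m ≥ 3` and odd `n ≥ 5`, any two distinct vertices in the same
column of `P_m □ C_n` are separated by a 2-factor consisting of two cycles. -/
theorem statement_6 (m n : ℕ) (hm : 3 ≤ m) (hn : 5 ≤ n) (hodd : Odd n)
    (i : Fin m) (j j' : ZMod n) (hjj : j ≠ j') :
    ∃ H, IsTwoFactor (pathGraph m □ cycleZMod n) H ∧
      SeparatesSet H {(i, j), (i, j')} := by

  have hnz : NeZero n := ⟨by omega⟩
  have hm0 : 0 < m := by omega
  have h2ne : (2 : ZMod n) ≠ 0 := by
    have := zmod_cast_ne_zero (n := n) hn (r := 2) (by omega) (by omega)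
    simpa using this
  obtain ⟨a, haj, hj'1, hj'2⟩ : ∃ a : ZMod n, (j = a ∨ j = a + 1) ∧ j' ≠ a ∧ j' ≠ a + 1 := by
    by_cases hcase : j + 1 = j'
    · refine ⟨j - 1, Or.inr (by ring), ?_, ?_⟩
      · intro h
        apply h2ne
        have : j + 1 = j - 1 := hcase.trans h
        linear_combination this
      · intro h
        apply hjj
        rw [h]; ring
    · exact ⟨j, Or.inl rfl, fun h => hjj h.symm, fun h => hcase h.symm⟩
  rcases Nat.even_or_odd m with hpar | hpar
  · exact case_even m n hm hn (Nat.even_iff.mp hpar) a j j' i haj hj'1 hj'2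
  · have hm2 : m % 2 = 1 := Nat.odd_iff.mp hpar
    by_cases hi : i.val = 0
    · refine case_odd m n hm hn hm2 a j j' i haj hj'1 hj'2 (rcol m hm0) (m-1)
        (fun s t hs ht h => rcol_inj hm0 hs ht h) (fun s hs => rcol_adj hm0 hs)
        (rcol_surj hm0) ?_ (by omega) (by omega)
      apply Fin.ext
      show m - 1 - (m - 1) = i.val
      omega
    · refine case_odd m n hm hn hm2 a j j' i haj hj'1 hj'2 (col m hm0) i.val
        (fun s t hs ht h => col_inj hm0 hs ht h) (fun s hs => col_adj hm0 hs)
        (col_surj hm0) ?_ (by omega) i.isLt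
      apply Fin.ext
      exact Nat.mod_eq_of_lt i.isLt
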